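/- Let C ∈ ℝ^{n×n} and π_R ∈ ℝ^n, and suppose lim_{k→∞} π_Rᵀ C^k = n·c·uᵀ exists (as a row vector limit) where the limit has squared Euclidean norm S := lim_{k→∞} ‖π_Rᵀ C^k‖². Define M₁ := ‖π_Rᵀ C‖² + ∑_{t=1}^{∞} ‖π_Rᵀ(C^{t+1} − C^t)‖² and M₉ := ∑_{t=1}^{∞} t‖π_Rᵀ(C^{t+1} − C^t)‖, assuming both are finite. Then S ≤ 10·max{M₁, M₉, M₁M₉}. -/

import Mathlib

/-- Euclidean norm of a finite real vector. -/
noncomputable def eNorm {n : ℕ} (v : Fin n → ℝ) : ℝ :=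
  Real.sqrt (∑ i, (v i) ^ 2)

lemma eNorm_eq_norm {n : ℕ} (v : Fin n → ℝ) :
    eNorm v = ‖(WithLp.equiv 2 (Fin n → ℝ)).symm v‖ := by
  rw [EuclideanSpace.norm_eq]
  simp [eNorm, sq_abs]

lemma eNorm_nonneg {n : ℕ} (v : Fin n → ℝ) : 0 ≤ eNorm v := Real.sqrt_nonneg _

lemma eNorm_add_sum_le {n : ℕ} (x : Fin n → ℝ) (m : ℕ) (f : ℕ → Fin n → ℝ) :
    eNorm (x + ∑ t ∈ Finset.range m, f t) ≤
      eNorm x + ∑ t ∈ Finset.range m, eNorm (f t) := by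
  simp only [eNorm_eq_norm]
  have h1 : (WithLp.equiv 2 (Fin n → ℝ)).symm (x + ∑ t ∈ Finset.range m, f t) =
      (WithLp.equiv 2 (Fin n → ℝ)).symm x +
        ∑ t ∈ Finset.range m, (WithLp.equiv 2 (Fin n → ℝ)).symm (f t) := by
    rw [WithLp.equiv_symm_apply, WithLp.toLp_add, WithLp.toLp_sum]
  rw [h1]
  refine le_trans (norm_add_le _ _) ?_
  gcongr
  exact norm_sum_le _ _

lemma sum_inv_sq_le (m : ℕ) :
    ∑ t ∈ Finset.range m, (1 / ((t : ℝ) + 1)) ^ 2 ≤ 2 := by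
  have key : ∀ m : ℕ,
      ∑ t ∈ Finset.range m, (1 / ((t : ℝ) + 1)) ^ 2 ≤ 2 - 2 / ((m : ℝ) + 1) := by
    intro m
    induction m with
    | zero => norm_num
    | succ k ih =>
      rw [Finset.sum_range_succ]
      have hk : (0 : ℝ) < (k : ℝ) + 1 := by positivity
      have hk2 : (0 : ℝ) < (k : ℝ) + 2 := by positivity
      have hstep : (1 / ((k : ℝ) + 1)) ^ 2 ≤ 2 / ((k : ℝ) + 1) - 2 / ((k : ℝ) + 2) := by
        rw [div_sub_div _ _ (ne_of_gt hk) (ne_of_gt hk2), div_pow,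
          div_le_div_iff₀ (by positivity) (by positivity)]
        nlinarith
      push_cast
      have : ((k : ℝ) + 1 + 1) = (k : ℝ) + 2 := by ring
      rw [this]
      linarith
  have h := key m
  have : (0:ℝ) ≤ 2 / ((m : ℝ) + 1) := by positivity
  linarith

set_option maxHeartbeats 1000000 in
theorem stmt19 (n : ℕ) (C : Matrix (Fin n) (Fin n) ℝ) (πR : Fin n → ℝ) (S M₁ M₉ : ℝ)
    (hS : Filter.Tendsto (fun k : ℕ => (eNorm (Matrix.vecMul πR (C ^ k))) ^ 2)
      Filter.atTop (nhds S))
    (hsum1 : Summable (fun t : ℕ => (eNorm (Matrix.vecMul πR (C ^ (t + 2) - C ^ (t + 1)))) ^ 2))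
    (hM1 : M₁ = (eNorm (Matrix.vecMul πR C)) ^ 2 +
      ∑' t : ℕ, (eNorm (Matrix.vecMul πR (C ^ (t + 2) - C ^ (t + 1)))) ^ 2)
    (hsum9 : Summable (fun t : ℕ =>
      ((t : ℝ) + 1) * eNorm (Matrix.vecMul πR (C ^ (t + 2) - C ^ (t + 1)))))
    (hM9 : M₉ = ∑' t : ℕ,
      ((t : ℝ) + 1) * eNorm (Matrix.vecMul πR (C ^ (t + 2) - C ^ (t + 1)))) :
    S ≤ 10 * max M₁ (max M₉ (M₁ * M₉)) := by
  set d : ℕ → ℝ := fun t => eNorm (Matrix.vecMul πR (C ^ (t + 2) - C ^ (t + 1))) with hd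
  have hdnn : ∀ t, 0 ≤ d t := fun t => eNorm_nonneg _
  set a : ℝ := eNorm (Matrix.vecMul πR C) with ha
  have hann : 0 ≤ a := eNorm_nonneg _
  set D : ℝ := ∑' t : ℕ, (d t) ^ 2 with hD
  have hDnn : 0 ≤ D := tsum_nonneg fun t => sq_nonneg _
  have hM9nn : 0 ≤ M₉ := hM9 ▸ tsum_nonneg fun t =>
    mul_nonneg (by positivity) (hdnn t)
  have haM1 : a ^ 2 + D = M₁ := hM1.symm
  have hDleM1 : D ≤ M₁ := by nlinarith [sq_nonneg a]
  have ha2leM1 : a ^ 2 ≤ M₁ := by linarith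
  have hM1nn : 0 ≤ M₁ := le_trans hDnn hDleM1
  set X : ℝ := max M₁ (max M₉ (M₁ * M₉)) with hX
  have hXnn : 0 ≤ X := le_trans hM1nn (le_max_left _ _)
  -- key per-k bound
  have main : ∀ m : ℕ, (eNorm (Matrix.vecMul πR (C ^ (m + 1)))) ^ 2 ≤ 10 * X := by
    intro m
    -- telescoping
    have tel : Matrix.vecMul πR (C ^ (m + 1)) = Matrix.vecMul πR C +
        ∑ t ∈ Finset.range m, Matrix.vecMul πR (C ^ (t + 2) - C ^ (t + 1)) := by
      have heq : ∀ t, Matrix.vecMul πR (C ^ (t + 2) - C ^ (t + 1)) =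
          Matrix.vecMul πR (C ^ (t + 1 + 1)) - Matrix.vecMul πR (C ^ (t + 1)) := by
        intro t
        rw [Matrix.vecMul_sub]
      simp_rw [heq]
      rw [Finset.sum_range_sub (fun t => Matrix.vecMul πR (C ^ (t + 1)))]
      simp [pow_one]
    have tri : eNorm (Matrix.vecMul πR (C ^ (m + 1))) ≤ a + ∑ t ∈ Finset.range m, d t := by
      rw [tel]; exact eNorm_add_sum_le _ _ _
    set F : ℝ := ∑ t ∈ Finset.range m, d t with hF
    have hFnn : 0 ≤ F := Finset.sum_nonneg fun t _ => hdnn t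
    set G : ℝ := ∑ t ∈ Finset.range m, d t / ((t : ℝ) + 1) with hG
    have hGnn : 0 ≤ G := Finset.sum_nonneg fun t _ =>
      div_nonneg (hdnn t) (by positivity)
    have cs1 : F ^ 2 ≤ (∑ t ∈ Finset.range m, ((t : ℝ) + 1) * d t) * G := by
      refine Finset.sum_sq_le_sum_mul_sum_of_sq_eq_mul _
        (fun t _ => mul_nonneg (by positivity) (hdnn t))
        (fun t _ => div_nonneg (hdnn t) (by positivity)) (fun t _ => ?_)
      have ht : ((t : ℝ) + 1) ≠ 0 := by positivity
      field_simp
    have cs2 : G ^ 2 ≤ D * 2 := by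
      have hcs : G ^ 2 ≤ (∑ t ∈ Finset.range m, (d t) ^ 2) *
          (∑ t ∈ Finset.range m, (1 / ((t : ℝ) + 1)) ^ 2) := by
        have h := Finset.sum_mul_sq_le_sq_mul_sq (Finset.range m) d
          (fun t => 1 / ((t : ℝ) + 1))
        calc G ^ 2 = (∑ t ∈ Finset.range m, d t * (1 / ((t : ℝ) + 1))) ^ 2 := by
              congr 1; refine Finset.sum_congr rfl fun t _ => ?_; rw [mul_one_div]
          _ ≤ _ := h
      have h1 : ∑ t ∈ Finset.range m, (d t) ^ 2 ≤ D :=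
        Summable.sum_le_tsum _ (fun t _ => sq_nonneg _) hsum1
      have h2 := sum_inv_sq_le m
      have h3 : (0:ℝ) ≤ ∑ t ∈ Finset.range m, (1 / ((t : ℝ) + 1)) ^ 2 :=
        Finset.sum_nonneg fun t _ => sq_nonneg _
      have h4 : (0:ℝ) ≤ ∑ t ∈ Finset.range m, (d t) ^ 2 :=
        Finset.sum_nonneg fun t _ => sq_nonneg _
      exact le_trans hcs (mul_le_mul h1 h2 h3 hDnn)
    have hsum9le : ∑ t ∈ Finset.range m, ((t : ℝ) + 1) * d t ≤ M₉ := by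
      rw [hM9]
      exact Summable.sum_le_tsum _ (fun t _ => mul_nonneg (by positivity) (hdnn t)) hsum9
    have hGle : G ≤ Real.sqrt (2 * M₁) := by
      have hG2 : G ^ 2 ≤ 2 * M₁ := by nlinarith
      calc G = Real.sqrt (G ^ 2) := (Real.sqrt_sq hGnn).symm
        _ ≤ Real.sqrt (2 * M₁) := Real.sqrt_le_sqrt hG2
    have hF2 : F ^ 2 ≤ M₉ * Real.sqrt (2 * M₁) := by
      have hsnn : 0 ≤ ∑ t ∈ Finset.range m, ((t : ℝ) + 1) * d t :=
        Finset.sum_nonneg fun t _ => mul_nonneg (by positivity) (hdnn t)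
      calc F ^ 2 ≤ (∑ t ∈ Finset.range m, ((t : ℝ) + 1) * d t) * G := cs1
        _ ≤ M₉ * Real.sqrt (2 * M₁) := mul_le_mul hsum9le hGle hGnn hM9nn
    have hsqrt : Real.sqrt (2 * M₁) ≤ Real.sqrt 2 * max 1 M₁ := by
      rw [Real.sqrt_mul (by norm_num : (0:ℝ) ≤ 2)]
      have hM1max : Real.sqrt M₁ ≤ max 1 M₁ := by
        have h : M₁ ≤ (max 1 M₁) ^ 2 := by
          rcases le_total M₁ 1 with h | h
          · have h1 : (1:ℝ) ≤ max 1 M₁ := le_max_left _ _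
            nlinarith
          · have h1 : M₁ ≤ max 1 M₁ := le_max_right _ _
            nlinarith
        calc Real.sqrt M₁ ≤ Real.sqrt ((max 1 M₁) ^ 2) := Real.sqrt_le_sqrt h
          _ = max 1 M₁ := Real.sqrt_sq (le_trans zero_le_one (le_max_left _ _))
      exact mul_le_mul_of_nonneg_left hM1max (Real.sqrt_nonneg 2)
    have hmaxle : M₉ * max 1 M₁ ≤ X := by
      rw [mul_max_of_nonneg _ _ hM9nn, mul_one]
      refine max_le (le_trans (le_max_left _ _) (le_max_right _ _)) ?_
      rw [mul_comm]
      exact le_trans (le_max_right _ _) (le_max_right _ _)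
    have hF2X : F ^ 2 ≤ Real.sqrt 2 * X := by
      have h2 : 0 ≤ Real.sqrt 2 := Real.sqrt_nonneg 2
      calc F ^ 2 ≤ M₉ * Real.sqrt (2 * M₁) := hF2
        _ ≤ M₉ * (Real.sqrt 2 * max 1 M₁) := mul_le_mul_of_nonneg_left hsqrt hM9nn
        _ = Real.sqrt 2 * (M₉ * max 1 M₁) := by ring
        _ ≤ Real.sqrt 2 * X := mul_le_mul_of_nonneg_left hmaxle h2
    have hnn : 0 ≤ eNorm (Matrix.vecMul πR (C ^ (m + 1))) := eNorm_nonneg _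
    have hsq : (eNorm (Matrix.vecMul πR (C ^ (m + 1)))) ^ 2 ≤ (a + F) ^ 2 :=
      pow_le_pow_left₀ hnn tri 2
    have h2af : (a + F) ^ 2 ≤ 2 * a ^ 2 + 2 * F ^ 2 := by nlinarith [sq_nonneg (a - F)]
    have hs2 : Real.sqrt 2 ≤ 1.5 := by
      rw [show (1.5 : ℝ) = Real.sqrt (1.5 ^ 2) from (Real.sqrt_sq (by norm_num)).symm]
      exact Real.sqrt_le_sqrt (by norm_num)
    have hM1X : M₁ ≤ X := le_max_left _ _
    have hs2X : Real.sqrt 2 * X ≤ 1.5 * X := mul_le_mul_of_nonneg_right hs2 hXnn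
    calc (eNorm (Matrix.vecMul πR (C ^ (m + 1)))) ^ 2 ≤ 2 * a ^ 2 + 2 * F ^ 2 :=
          le_trans hsq h2af
      _ ≤ 2 * M₁ + 2 * (1.5 * X) := by linarith
      _ ≤ 10 * X := by linarith
  refine le_of_tendsto hS ?_
  rw [Filter.eventually_atTop]
  refine ⟨1, fun k hk => ?_⟩
  obtain ⟨m, rfl⟩ := Nat.exists_eq_add_of_le hk
  have := main m
  simpa [Nat.add_comm] using this
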